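/- Let α ∈ (1/2, 1), u ∈ C²([0,1]) with u(0) = u'(0) = 0, and v ∈ C¹([0,1]). Define E = ½∫₀¹ v(x)² dx + ½∫₀¹ u''(x)² dx + ½∫₀¹ v'(x)² dx and ϱ = ∫₀¹ ( v(x)(x u'(x) − α u(x)) + v'(x)((1−α)u'(x) + x u''(x)) ) dx. Then |ϱ| ≤ ((1+α)/2)∫₀¹ v² dx + (3/2)∫₀¹ u''² dx + ((2−α)/2)∫₀¹ v'² dx, and consequently |ϱ| ≤ 3E. -/

import Mathlib

open intervalIntegral MeasureTheory

/-- Cauchy–Schwarz on `[0,1]`: `(∫ g)^2 ≤ ∫ g^2`. -/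
lemma aux_sq_int (g : ℝ → ℝ) (hg : Continuous g) :
    (∫ x in (0:ℝ)..1, g x) ^ 2 ≤ ∫ x in (0:ℝ)..1, (g x) ^ 2 := by
  set m := ∫ x in (0:ℝ)..1, g x with hm
  have hig : IntervalIntegrable g volume 0 1 := hg.intervalIntegrable _ _
  have hig2 : IntervalIntegrable (fun x => (g x) ^ 2) volume 0 1 :=
    (hg.pow 2).intervalIntegrable _ _
  have h0 : (0:ℝ) ≤ ∫ x in (0:ℝ)..1, (g x - m) ^ 2 :=
    intervalIntegral.integral_nonneg (by norm_num) (fun x _ => sq_nonneg _)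
  have hexp : ∫ x in (0:ℝ)..1, (g x - m) ^ 2
      = (∫ x in (0:ℝ)..1, (g x) ^ 2) - 2 * m * m + m ^ 2 := by
    have h1 : ∀ x : ℝ, (g x - m) ^ 2 = (g x) ^ 2 - (2 * m) * g x + m ^ 2 := by
      intro x; ring
    simp_rw [h1]
    rw [intervalIntegral.integral_add (hig2.sub (hig.const_mul _)) _root_.intervalIntegrable_const,
        intervalIntegral.integral_sub hig2 (hig.const_mul _),
        intervalIntegral.integral_const_mul, intervalIntegral.integral_const]
    simp [← hm]
  nlinarith [sq_nonneg m, h0, hexp]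

/-- Poincaré-type inequality: if `h 0 = 0` then `∫₀¹ h² ≤ ∫₀¹ (h')²`. -/
lemma aux_poincare (h : ℝ → ℝ) (hd : Differentiable ℝ h) (hc : Continuous (deriv h))
    (h0 : h 0 = 0) :
    ∫ x in (0:ℝ)..1, (h x) ^ 2 ≤ ∫ x in (0:ℝ)..1, (deriv h x) ^ 2 := by
  set M := ∫ t in (0:ℝ)..1, |deriv h t| with hM
  have key : ∀ x ∈ Set.Icc (0:ℝ) 1, (h x) ^ 2 ≤ ∫ t in (0:ℝ)..1, (deriv h t) ^ 2 := by
    intro x hx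
    have hftc : ∫ t in (0:ℝ)..x, deriv h t = h x - h 0 :=
      intervalIntegral.integral_deriv_eq_sub (fun t _ => hd t)
        (hc.intervalIntegrable _ _)
    have h1 : |h x| ≤ M := by
      have e1 : h x = ∫ t in (0:ℝ)..x, deriv h t := by rw [hftc, h0, sub_zero]
      rw [e1]
      calc |∫ t in (0:ℝ)..x, deriv h t| ≤ ∫ t in (0:ℝ)..x, |deriv h t| :=
            intervalIntegral.abs_integral_le_integral_abs hx.1
        _ ≤ M := by
            apply intervalIntegral.integral_mono_interval le_rfl hx.1 hx.2
            · filter_upwards with t using abs_nonneg _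
            · exact (hc.abs).intervalIntegrable _ _
    have h2 : (h x) ^ 2 ≤ M ^ 2 := by
      have := pow_le_pow_left₀ (abs_nonneg (h x)) h1 2
      simpa [sq_abs] using this
    have h3 : M ^ 2 ≤ ∫ t in (0:ℝ)..1, (deriv h t) ^ 2 := by
      have := aux_sq_int (fun t => |deriv h t|) hc.abs
      simpa [sq_abs, ← hM] using this
    linarith
  set K := ∫ t in (0:ℝ)..1, (deriv h t) ^ 2 with hK
  calc ∫ x in (0:ℝ)..1, (h x) ^ 2
      ≤ ∫ _x in (0:ℝ)..1, K :=
        intervalIntegral.integral_mono_on (by norm_num)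
          ((hd.continuous.pow 2).intervalIntegrable _ _)
          (_root_.intervalIntegrable_const (c := K)) key
    _ = K := by simp

set_option maxHeartbeats 2000000 in
/-- Bound on the auxiliary functional ϱ: |ϱ| ≤ ((1+α)/2)∫v² + (3/2)∫u''² + ((2−α)/2)∫v'²,
and consequently |ϱ| ≤ 3E. -/
theorem stmt_2 (α : ℝ) (hα : 1/2 < α ∧ α < 1)
    (u v : ℝ → ℝ) (hu : ContDiff ℝ 2 u) (hv : ContDiff ℝ 1 v)
    (hu0 : u 0 = 0) (hu0' : deriv u 0 = 0)
    (E ρ : ℝ)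
    (hE : E = (1/2) * (∫ x in (0:ℝ)..1, (v x) ^ 2)
        + (1/2) * (∫ x in (0:ℝ)..1, (deriv (deriv u) x) ^ 2)
        + (1/2) * (∫ x in (0:ℝ)..1, (deriv v x) ^ 2))
    (hρ : ρ = ∫ x in (0:ℝ)..1,
        (v x * (x * deriv u x - α * u x)
          + deriv v x * ((1 - α) * deriv u x + x * deriv (deriv u) x))) :
    |ρ| ≤ ((1 + α)/2) * (∫ x in (0:ℝ)..1, (v x) ^ 2)
        + (3/2) * (∫ x in (0:ℝ)..1, (deriv (deriv u) x) ^ 2)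
        + ((2 - α)/2) * (∫ x in (0:ℝ)..1, (deriv v x) ^ 2) ∧
    |ρ| ≤ 3 * E := by
  obtain ⟨hα1, hα2⟩ := hα
  have hα0 : (0:ℝ) ≤ α := by linarith
  have h1α : (0:ℝ) ≤ 1 - α := by linarith
  -- smoothness facts
  have hud : Differentiable ℝ u := hu.differentiable (by norm_num)
  have huc1 : ContDiff ℝ 1 (deriv u) := by
    have hu' : ContDiff ℝ (1 + 1 : ℕ) u := by exact_mod_cast hu
    exact ((contDiff_succ_iff_deriv (n := 1)).mp (by exact_mod_cast hu')).2.2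
  have hfd : Differentiable ℝ (deriv u) := huc1.differentiable one_ne_zero
  have hgc : Continuous (deriv (deriv u)) := huc1.continuous_deriv le_rfl
  have hfc : Continuous (deriv u) := hfd.continuous
  have huc : Continuous u := hud.continuous
  have hvd : Differentiable ℝ v := hv.differentiable one_ne_zero
  have hvc : Continuous v := hvd.continuous
  have hvpc : Continuous (deriv v) := hv.continuous_deriv le_rfl
  set f := deriv u with hf
  set g := deriv (deriv u) with hg
  set w := deriv v with hw
  -- integrability
  have iv2 : IntervalIntegrable (fun x => (v x) ^ 2) volume 0 1 :=
    (hvc.pow 2).intervalIntegrable _ _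
  have iw2 : IntervalIntegrable (fun x => (w x) ^ 2) volume 0 1 :=
    (hvpc.pow 2).intervalIntegrable _ _
  have if2 : IntervalIntegrable (fun x => (f x) ^ 2) volume 0 1 :=
    (hfc.pow 2).intervalIntegrable _ _
  have iu2 : IntervalIntegrable (fun x => (u x) ^ 2) volume 0 1 :=
    (huc.pow 2).intervalIntegrable _ _
  have ig2 : IntervalIntegrable (fun x => (g x) ^ 2) volume 0 1 :=
    (hgc.pow 2).intervalIntegrable _ _
  have hFc : Continuous (fun x : ℝ => v x * (x * f x - α * u x)
      + w x * ((1 - α) * f x + x * g x)) := by fun_prop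
  -- abbreviations
  set A := ∫ x in (0:ℝ)..1, (v x) ^ 2 with hA
  set B := ∫ x in (0:ℝ)..1, (w x) ^ 2 with hB
  set F := ∫ x in (0:ℝ)..1, (f x) ^ 2 with hF
  set U := ∫ x in (0:ℝ)..1, (u x) ^ 2 with hU
  set G := ∫ x in (0:ℝ)..1, (g x) ^ 2 with hG
  -- step 1: |ρ| ≤ ∫ |integrand|
  have habs : |ρ| ≤ ∫ x in (0:ℝ)..1,
      |v x * (x * f x - α * u x) + w x * ((1 - α) * f x + x * g x)| := by
    rw [hρ]
    exact intervalIntegral.abs_integral_le_integral_abs (by norm_num)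
  -- step 2: pointwise bound
  have hpt : ∀ x ∈ Set.Icc (0:ℝ) 1,
      |v x * (x * f x - α * u x) + w x * ((1 - α) * f x + x * g x)|
        ≤ (1 + α)/2 * (v x) ^ 2 + (2 - α)/2 * (w x) ^ 2 + (2 - α)/2 * (f x) ^ 2
          + α/2 * (u x) ^ 2 + 1/2 * (g x) ^ 2 := by
    intro x hx
    obtain ⟨hx0, hx1⟩ := hx
    have hx1' : (0:ℝ) ≤ 1 - x := by linarith
    rw [abs_le]
    constructor
    · nlinarith [mul_nonneg hx0 (sq_nonneg (v x + f x)),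
        mul_nonneg hx0 (sq_nonneg (w x + g x)),
        mul_nonneg hx1' (sq_nonneg (v x)), mul_nonneg hx1' (sq_nonneg (f x)),
        mul_nonneg hx1' (sq_nonneg (w x)), mul_nonneg hx1' (sq_nonneg (g x)),
        mul_nonneg hα0 (sq_nonneg (v x - u x)),
        mul_nonneg h1α (sq_nonneg (w x + f x))]
    · nlinarith [mul_nonneg hx0 (sq_nonneg (v x - f x)),
        mul_nonneg hx0 (sq_nonneg (w x - g x)),
        mul_nonneg hx1' (sq_nonneg (v x)), mul_nonneg hx1' (sq_nonneg (f x)),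
        mul_nonneg hx1' (sq_nonneg (w x)), mul_nonneg hx1' (sq_nonneg (g x)),
        mul_nonneg hα0 (sq_nonneg (v x + u x)),
        mul_nonneg h1α (sq_nonneg (w x - f x))]
  -- step 3: integrate the pointwise bound
  have hmono : (∫ x in (0:ℝ)..1,
      |v x * (x * f x - α * u x) + w x * ((1 - α) * f x + x * g x)|)
      ≤ ∫ x in (0:ℝ)..1, ((1 + α)/2 * (v x) ^ 2 + (2 - α)/2 * (w x) ^ 2
          + (2 - α)/2 * (f x) ^ 2 + α/2 * (u x) ^ 2 + 1/2 * (g x) ^ 2) :=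
    intervalIntegral.integral_mono_on (by norm_num)
      (hFc.abs.intervalIntegrable _ _)
      ((((((iv2.const_mul _).add (iw2.const_mul _)).add (if2.const_mul _)).add
        (iu2.const_mul _)).add (ig2.const_mul _))) hpt
  have hlin : (∫ x in (0:ℝ)..1, ((1 + α)/2 * (v x) ^ 2 + (2 - α)/2 * (w x) ^ 2
          + (2 - α)/2 * (f x) ^ 2 + α/2 * (u x) ^ 2 + 1/2 * (g x) ^ 2))
      = (1 + α)/2 * A + (2 - α)/2 * B + (2 - α)/2 * F + α/2 * U + 1/2 * G := by
    rw [intervalIntegral.integral_add ((((iv2.const_mul _).add (iw2.const_mul _)).add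
          (if2.const_mul _)).add (iu2.const_mul _)) (ig2.const_mul _),
        intervalIntegral.integral_add (((iv2.const_mul _).add (iw2.const_mul _)).add
          (if2.const_mul _)) (iu2.const_mul _),
        intervalIntegral.integral_add ((iv2.const_mul _).add (iw2.const_mul _))
          (if2.const_mul _),
        intervalIntegral.integral_add (iv2.const_mul _) (iw2.const_mul _),
        intervalIntegral.integral_const_mul, intervalIntegral.integral_const_mul,
        intervalIntegral.integral_const_mul, intervalIntegral.integral_const_mul,
        intervalIntegral.integral_const_mul]
  -- step 4: Poincaré inequalities
  have hFG : F ≤ G := aux_poincare (deriv u) hfd hgc hu0'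
  have hUF : U ≤ F := aux_poincare u hud hfc hu0
  -- nonnegativity
  have hA0 : 0 ≤ A := intervalIntegral.integral_nonneg (by norm_num) (fun x _ => sq_nonneg _)
  have hB0 : 0 ≤ B := intervalIntegral.integral_nonneg (by norm_num) (fun x _ => sq_nonneg _)
  have hG0 : 0 ≤ G := intervalIntegral.integral_nonneg (by norm_num) (fun x _ => sq_nonneg _)
  have main : |ρ| ≤ (1 + α)/2 * A + (3/2) * G + (2 - α)/2 * B := by
    have h5 : |ρ| ≤ (1 + α)/2 * A + (2 - α)/2 * B + (2 - α)/2 * F + α/2 * U + 1/2 * G := by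
      rw [← hlin]; exact habs.trans hmono
    nlinarith [mul_nonneg h1α (sub_nonneg.mpr hFG), mul_nonneg hα0 (sub_nonneg.mpr (hUF.trans hFG))]
  refine ⟨main, ?_⟩
  rw [hE]
  nlinarith [mul_nonneg hα0 hA0, mul_nonneg h1α hB0]
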